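/- Let 𝒫 = ({u_{xj}}, {v_{xj}}) be a converting vector set from ρ to σ with max_{x∈X} w_+(𝒫, x) > 0 and max_{x∈X} w_−(𝒫, x) > 0. Then there exists a converting vector set 𝒫' from ρ to σ such that W(𝒫') ≤ W(𝒫) and max_{x∈X} w_+(𝒫', x) = max_{x∈X} w_−(𝒫', x). -/

import Mathlib

noncomputable section

open Finset

variable {q n m : ℕ} {𝓗 : Type*} [NormedAddCommGroup 𝓗] [InnerProductSpace ℂ 𝓗]

/-- `(u, v)` is a converting vector set from `ρ` to `σ` (relative to `X`):
for all `x, y ∈ X`, `⟨ρ_x|ρ_y⟩ − ⟨σ_x|σ_y⟩ = Σ_{j : x_j ≠ y_j} ⟨u_{xj}|v_{yj}⟩`. -/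
def IsCVS (X : Finset (Fin n → Fin q)) (ρ σ : (Fin n → Fin q) → 𝓗)
    (u v : (Fin n → Fin q) → Fin n → EuclideanSpace ℂ (Fin m)) : Prop :=
  ∀ x ∈ X, ∀ y ∈ X,
    (inner ℂ (ρ x) (ρ y) : ℂ) - (inner ℂ (σ x) (σ y) : ℂ) =
      ∑ j ∈ Finset.univ.filter (fun j => x j ≠ y j), (inner ℂ (u x j) (v y j) : ℂ)

/-- positive witness size `w_+(𝒫,x) = Σ_j ‖u_{xj}‖²` (for the `v`-family this is
the negative witness size `w_−`). -/
def wSize (u : (Fin n → Fin q) → Fin n → EuclideanSpace ℂ (Fin m))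
    (x : Fin n → Fin q) : ℝ :=
  ∑ j : Fin n, ‖u x j‖ ^ 2

lemma sup'_mul_const {α : Type*} (X : Finset α) (hX : X.Nonempty) (f : α → ℝ)
    {k : ℝ} (hk : 0 ≤ k) :
    X.sup' hX (fun x => k * f x) = k * X.sup' hX f :=
  (Finset.comp_sup'_eq_sup'_comp hX (fun r => k * r)
    (fun a b => (mul_max_of_nonneg a b hk))).symm

lemma wSize_smul (u : (Fin n → Fin q) → Fin n → EuclideanSpace ℂ (Fin m))
    (c : ℝ) (x : Fin n → Fin q) (hc : 0 ≤ c) :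
    wSize (fun y j => (c : ℂ) • u y j) x = c ^ 2 * wSize u x := by
  unfold wSize
  rw [Finset.mul_sum]
  congr 1; ext j
  rw [norm_smul, mul_pow, Complex.norm_real, Real.norm_eq_abs, abs_of_nonneg hc]

/-- a converting vector set with nonzero maximal positive and negative
witness sizes can be rebalanced so that the maximal positive and negative witness
sizes agree, without increasing the overall witness size `W`. -/
theorem normalize_cvs (hq : 2 ≤ q) (hn : 1 ≤ n) (hm : 1 ≤ m)
    [FiniteDimensional ℂ 𝓗]
    (X : Finset (Fin n → Fin q)) (hX : X.Nonempty)
    (ρ σ : (Fin n → Fin q) → 𝓗)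
    (hρ : ∀ x ∈ X, ‖ρ x‖ = 1) (hσ : ∀ x ∈ X, ‖σ x‖ = 1)
    (u v : (Fin n → Fin q) → Fin n → EuclideanSpace ℂ (Fin m))
    (hP : IsCVS X ρ σ u v)
    (hplus : 0 < X.sup' hX (wSize u)) (hminus : 0 < X.sup' hX (wSize v)) :
    ∃ u' v' : (Fin n → Fin q) → Fin n → EuclideanSpace ℂ (Fin m),
      IsCVS X ρ σ u' v' ∧
      X.sup' hX (fun x => max (wSize u' x) (wSize v' x)) ≤
        X.sup' hX (fun x => max (wSize u x) (wSize v x)) ∧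
      X.sup' hX (wSize u') = X.sup' hX (wSize v') := by
  set A := X.sup' hX (wSize u) with hAdef
  set B := X.sup' hX (wSize v) with hBdef
  set t : ℝ := Real.sqrt (B / A) with htdef
  have ht : 0 < t := Real.sqrt_pos.mpr (div_pos hminus hplus)
  have ht2 : t ^ 2 = B / A := Real.sq_sqrt (le_of_lt (div_pos hminus hplus))
  set c : ℝ := Real.sqrt t with hcdef
  have hc : 0 < c := Real.sqrt_pos.mpr ht
  have hc2 : c ^ 2 = t := Real.sq_sqrt ht.le
  refine ⟨fun x j => (c : ℂ) • u x j, fun x j => ((c⁻¹ : ℝ) : ℂ) • v x j, ?_, ?_, ?_⟩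
  · intro x hx y hy
    rw [hP x hx y hy]
    apply Finset.sum_congr rfl
    intro j _
    rw [inner_smul_left, inner_smul_right, Complex.conj_ofReal, ← mul_assoc,
      ← Complex.ofReal_mul, mul_inv_cancel₀ hc.ne', Complex.ofReal_one, one_mul]
  · apply Finset.sup'_le
    intro x hx
    have hwu : wSize (fun y j => (c : ℂ) • u y j) x = t * wSize u x := by
      rw [wSize_smul u c x hc.le, hc2]
    have hwv : wSize (fun y j => ((c⁻¹ : ℝ) : ℂ) • v y j) x = t⁻¹ * wSize v x := by
      rw [wSize_smul v c⁻¹ x (inv_nonneg.mpr hc.le), inv_pow, hc2]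
    have hwu_nn : 0 ≤ wSize u x := Finset.sum_nonneg fun j _ => sq_nonneg _
    have hwv_nn : 0 ≤ wSize v x := Finset.sum_nonneg fun j _ => sq_nonneg _
    have hA_le : A ≤ X.sup' hX (fun x => max (wSize u x) (wSize v x)) := by
      apply Finset.sup'_le
      intro y hy
      exact le_trans (le_max_left _ _) (Finset.le_sup' (fun x => max (wSize u x) (wSize v x)) hy)
    have hB_le : B ≤ X.sup' hX (fun x => max (wSize u x) (wSize v x)) := by
      apply Finset.sup'_le
      intro y hy
      exact le_trans (le_max_right _ _) (Finset.le_sup' (fun x => max (wSize u x) (wSize v x)) hy)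
    set M := X.sup' hX (fun x => max (wSize u x) (wSize v x)) with hM
    have hM_pos : 0 < M := lt_of_lt_of_le hplus hA_le
    have key : Real.sqrt (A * B) ≤ M := by
      have : A * B ≤ M * M := mul_le_mul hA_le hB_le hminus.le hM_pos.le
      calc Real.sqrt (A * B) ≤ Real.sqrt (M * M) := Real.sqrt_le_sqrt this
        _ = M := Real.sqrt_mul_self hM_pos.le
    have h1 : t * wSize u x ≤ M := by
      have h : t * wSize u x ≤ t * A :=
        mul_le_mul_of_nonneg_left (Finset.le_sup' (wSize u) hx) ht.le
      refine h.trans ?_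
      have : t * A = Real.sqrt (A * B) := by
        rw [← Real.sqrt_sq (mul_nonneg ht.le hplus.le)]
        congr 1
        rw [mul_pow, ht2]
        field_simp
      rw [this]; exact key
    have h2 : t⁻¹ * wSize v x ≤ M := by
      have h : t⁻¹ * wSize v x ≤ t⁻¹ * B :=
        mul_le_mul_of_nonneg_left (Finset.le_sup' (wSize v) hx) (inv_nonneg.mpr ht.le)
      refine h.trans ?_
      have : t⁻¹ * B = Real.sqrt (A * B) := by
        rw [← Real.sqrt_sq (mul_nonneg (inv_nonneg.mpr ht.le) hminus.le)]
        congr 1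
        rw [mul_pow, inv_pow, ht2]
        field_simp
      rw [this]; exact key
    rw [hwu, hwv]
    exact max_le h1 h2
  · have e1 : (X.sup' hX (wSize (fun y j => (c : ℂ) • u y j))) = t * A := by
      rw [show wSize (fun y j => (c : ℂ) • u y j) = fun x => t * wSize u x from
        funext fun x => by rw [wSize_smul u c x hc.le, hc2]]
      exact sup'_mul_const X hX (wSize u) ht.le
    have e2 : (X.sup' hX (wSize (fun y j => ((c⁻¹ : ℝ) : ℂ) • v y j))) = t⁻¹ * B := by
      rw [show wSize (fun y j => ((c⁻¹ : ℝ) : ℂ) • v y j) = fun x => t⁻¹ * wSize v x from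
        funext fun x => by rw [wSize_smul v c⁻¹ x (inv_nonneg.mpr hc.le), inv_pow, hc2]]
      exact sup'_mul_const X hX (wSize v) (inv_nonneg.mpr ht.le)
    rw [e1, e2]
    have hA : A ≠ 0 := hplus.ne'
    have : t ^ 2 * A = B := by rw [ht2]; field_simp
    field_simp
    nlinarith [this]
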